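/- There exists an absolute constant c > 0 (independent of k, L, δ) such that the following holds. Let k, L be integers with 2 ≤ L < k and L dividing k, and let δ : Fin k → ℝ be a nonzero vector with ∑_{i=1}^k δ_i = 0. Let f be a uniformly random balanced L-coloring of [k] and set Z_r = ∑_{i : f(i)=r} δ_i for r ∈ [L]. Then P( ‖Z‖₂ > ‖δ‖₂/2 ) ≥ c. -/

import Mathlib

open scoped BigOperators Classical

/-- The finite set of balanced `L`-colorings of `[k]`: functions `Fin k → Fin L` each of
whose fibers has exactly `k / L` elements. -/
noncomputable def balancedColorings (k L : ℕ) : Finset (Fin k → Fin L) :=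
  Finset.univ.filter fun f =>
    ∀ r : Fin L, (Finset.univ.filter fun i => f i = r).card = k / L

/-- For a coloring `f` and weights `δ`, `partSum δ f r = ∑_{i : f i = r} δ_i`. -/
noncomputable def partSum {k L : ℕ} (δ : Fin k → ℝ) (f : Fin k → Fin L) (r : Fin L) : ℝ :=
  ∑ i ∈ Finset.univ.filter (fun i => f i = r), δ i

namespace RFA
open Finset

lemma exists_perm_extend {α : Type*} [Fintype α] [DecidableEq α] {n : ℕ}
    (a b : Fin n → α) (ha : Function.Injective a) (hb : Function.Injective b) :
    ∃ σ : Equiv.Perm α, ∀ t, σ (a t) = b t := by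
  refine ⟨Equiv.extendSubtype ((Equiv.ofInjective a ha).symm.trans (Equiv.ofInjective b hb)), ?_⟩
  intro t
  have := Equiv.extendSubtype_apply_of_mem
    ((Equiv.ofInjective a ha).symm.trans (Equiv.ofInjective b hb)) (a t) ⟨t, rfl⟩
  rw [this]
  simp [Equiv.ofInjective_symm_apply]

variable {k L : ℕ}

lemma mem_balanced {f : Fin k → Fin L} :
    f ∈ balancedColorings k L ↔ ∀ r : Fin L, (univ.filter fun i => f i = r).card = k / L := by
  simp [balancedColorings]

lemma comp_mem_balanced (σ : Equiv.Perm (Fin k)) {f : Fin k → Fin L}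
    (hf : f ∈ balancedColorings k L) : f ∘ σ ∈ balancedColorings k L := by
  rw [mem_balanced] at hf ⊢
  intro r
  rw [← hf r]
  apply Finset.card_bij (fun i _ => σ i)
  · intro i hi; simp only [mem_filter, mem_univ, true_and] at hi ⊢; exact hi
  · intro i _ j _ h; exact σ.injective h
  · intro j hj
    simp only [mem_filter, mem_univ, true_and] at hj ⊢
    exact ⟨σ.symm j, by simpa using hj, by simp⟩

lemma count_comp (σ : Equiv.Perm (Fin k)) (p q : (Fin k → Fin L) → Prop)
    [DecidablePred p] [DecidablePred q] (h : ∀ f, q f ↔ p (f ∘ σ)) :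
    ((balancedColorings k L).filter q).card = ((balancedColorings k L).filter p).card := by
  apply Finset.card_bij (fun f _ => f ∘ σ)
  · intro f hf
    simp only [mem_filter] at hf ⊢
    exact ⟨comp_mem_balanced σ hf.1, (h f).1 hf.2⟩
  · intro f _ g _ hfg
    funext x
    have := congrFun hfg (σ.symm x)
    simpa using this
  · intro g hg
    simp only [mem_filter] at hg
    refine ⟨g ∘ σ.symm, ?_, ?_⟩
    · simp only [mem_filter]
      refine ⟨comp_mem_balanced σ.symm hg.1, (h _).2 ?_⟩
      have : (g ∘ ⇑σ.symm) ∘ ⇑σ = g := by funext x; simp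
      rw [this]; exact hg.2
    · funext x; simp

lemma balanced_nonempty {m : ℕ} (hm : k = L * m) (hL : 0 < L) :
    (balancedColorings k L).Nonempty := by
  have e : Fin k ≃ Fin L × Fin m := (finCongr hm).trans finProdFinEquiv.symm
  refine ⟨fun i => (e i).1, ?_⟩
  simp only [balancedColorings, mem_filter, mem_univ, true_and]
  intro r
  have h1 : (univ.filter fun i : Fin k => (e i).1 = r).card
      = Fintype.card {i : Fin k // (e i).1 = r} := (Fintype.card_subtype _).symm
  rw [h1]
  have e2 : {i : Fin k // (e i).1 = r} ≃ Fin m :=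
    ⟨fun p => (e p.1).2, fun t => ⟨e.symm (r, t), by simp⟩,
     fun p => by
       ext
       have : e p.1 = (r, (e p.1).2) := by
         ext <;> simp [p.2]
       simp [← this],
     fun t => by simp⟩
  rw [Fintype.card_congr e2, Fintype.card_fin]
  rw [hm, Nat.mul_div_cancel_left _ hL]

lemma fiber_card {m : ℕ} (hm : k = L * m) (hL : 0 < L) {f : Fin k → Fin L}
    (hf : f ∈ balancedColorings k L) (r : Fin L) :
    (univ.filter fun i => f i = r).card = m := by
  simp only [balancedColorings, mem_filter, mem_univ, true_and] at hf
  rw [hf r, hm, Nat.mul_div_cancel_left _ hL]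

/-- canonical pair count -/
noncomputable def P2 (k L : ℕ) (i j : Fin k) : ℕ :=
  ((balancedColorings k L).filter fun f => f j = f i).card

noncomputable def P3 (k L : ℕ) (x y z : Fin k) : ℕ :=
  ((balancedColorings k L).filter fun f => f x = f y ∧ f x = f z).card

noncomputable def P4 (k L : ℕ) (i j p q : Fin k) : ℕ :=
  ((balancedColorings k L).filter fun f => f j = f i ∧ f q = f p).card

lemma inj2 {α : Type*} {x y : α} (h : x ≠ y) : Function.Injective ![x, y] := by
  intro s t hst
  fin_cases s <;> fin_cases t <;> simp_all

lemma inj3 {α : Type*} {x y z : α} (h1 : x ≠ y) (h2 : x ≠ z) (h3 : y ≠ z) :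
    Function.Injective ![x, y, z] := by
  intro s t hst
  fin_cases s <;> fin_cases t <;> simp_all <;> tauto

lemma inj4 {α : Type*} {x y z w : α} (h1 : x ≠ y) (h2 : x ≠ z) (h3 : x ≠ w)
    (h4 : y ≠ z) (h5 : y ≠ w) (h6 : z ≠ w) :
    Function.Injective ![x, y, z, w] := by
  intro s t hst
  fin_cases s <;> fin_cases t <;> simp_all <;> tauto

lemma P2_eq {i j i' j' : Fin k} (h : j ≠ i) (h' : j' ≠ i') :
    P2 k L i j = P2 k L i' j' := by
  obtain ⟨σ, hσ⟩ := exists_perm_extend ![i', j'] ![i, j] (inj2 (Ne.symm h')) (inj2 (Ne.symm h))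
  have h0 : σ i' = i := hσ 0
  have h1 : σ j' = j := hσ 1
  unfold P2
  exact count_comp σ (fun f => f j' = f i') (fun f => f j = f i)
    (fun f => by simp [Function.comp, h0, h1])

lemma P3_eq {x y z x' y' z' : Fin k} (h1 : x ≠ y) (h2 : x ≠ z) (h3 : y ≠ z)
    (h1' : x' ≠ y') (h2' : x' ≠ z') (h3' : y' ≠ z') :
    P3 k L x y z = P3 k L x' y' z' := by
  obtain ⟨σ, hσ⟩ := exists_perm_extend ![x', y', z'] ![x, y, z]
    (inj3 h1' h2' h3') (inj3 h1 h2 h3)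
  have e0 : σ x' = x := hσ 0
  have e1 : σ y' = y := hσ 1
  have e2 : σ z' = z := hσ 2
  unfold P3
  exact count_comp σ (fun f => f x' = f y' ∧ f x' = f z') (fun f => f x = f y ∧ f x = f z)
    (fun f => by simp [Function.comp, e0, e1, e2])

lemma P4_eq {i j p q i' j' p' q' : Fin k}
    (h1 : i ≠ j) (h2 : i ≠ p) (h3 : i ≠ q) (h4 : j ≠ p) (h5 : j ≠ q) (h6 : p ≠ q)
    (h1' : i' ≠ j') (h2' : i' ≠ p') (h3' : i' ≠ q') (h4' : j' ≠ p') (h5' : j' ≠ q')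
    (h6' : p' ≠ q') :
    P4 k L i j p q = P4 k L i' j' p' q' := by
  obtain ⟨σ, hσ⟩ := exists_perm_extend ![i', j', p', q'] ![i, j, p, q]
    (inj4 h1' h2' h3' h4' h5' h6') (inj4 h1 h2 h3 h4 h5 h6)
  have e0 : σ i' = i := hσ 0
  have e1 : σ j' = j := hσ 1
  have e2 : σ p' = p := hσ 2
  have e3 : σ q' = q := hσ 3
  unfold P4
  exact count_comp σ (fun f => f j' = f i' ∧ f q' = f p') (fun f => f j = f i ∧ f q = f p)
    (fun f => by simp [Function.comp, e0, e1, e2, e3])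

lemma card_congr_iff {p q : (Fin k → Fin L) → Prop} [DecidablePred p] [DecidablePred q]
    (h : ∀ f, p f ↔ q f) :
    ((balancedColorings k L).filter p).card = ((balancedColorings k L).filter q).card := by
  congr 1
  exact Finset.filter_congr fun f _ => h f


noncomputable def hfun {k L : ℕ} (δ : Fin k → ℝ) (f : Fin k → Fin L) (i : Fin k) : ℝ :=
  ∑ j ∈ univ.erase i, δ j * (if f j = f i then 1 else 0)

noncomputable def Yfun {k L : ℕ} (δ : Fin k → ℝ) (f : Fin k → Fin L) : ℝ :=
  ∑ i, δ i * hfun δ f i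

variable {m : ℕ}

lemma P2_agg (hm : k = L * m) (hL0 : 0 < L) {i0 j0 : Fin k} (h : j0 ≠ i0) :
    (k - 1) * P2 k L i0 j0 = (m - 1) * (balancedColorings k L).card := by
  have key : ∑ j ∈ univ.erase i0, ((balancedColorings k L).filter fun f => f j = f i0).card
      = (k - 1) * P2 k L i0 j0 := by
    rw [Finset.sum_congr rfl (fun j hj => ?_), Finset.sum_const, smul_eq_mul,
      Finset.card_erase_of_mem (mem_univ _), Finset.card_univ, Fintype.card_fin]
    exact P2_eq (Finset.ne_of_mem_erase hj) h
  rw [← key]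
  have swap : ∑ j ∈ univ.erase i0, ((balancedColorings k L).filter fun f => f j = f i0).card
      = ∑ f ∈ balancedColorings k L, ((univ.erase i0).filter fun j => f j = f i0).card := by
    simp only [Finset.card_filter]
    exact Finset.sum_comm
  rw [swap]
  rw [Finset.sum_congr rfl (fun f hf => ?_), Finset.sum_const, smul_eq_mul, mul_comm]
  have h1 : ((univ.erase i0).filter fun j => f j = f i0)
      = ((univ.filter fun j => f j = f i0).erase i0) := by
    rw [Finset.filter_erase]
  rw [h1, Finset.card_erase_of_mem (by simp), fiber_card hm hL0 hf]

lemma W_eq (δ : Fin k → ℝ) (f : Fin k → Fin L) :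
    ∑ r, partSum δ f r ^ 2 = (∑ i, δ i ^ 2) + Yfun δ f := by
  have h1 : ∀ r : Fin L, partSum δ f r ^ 2
      = ∑ i ∈ univ.filter (fun i => f i = r), δ i * (∑ j ∈ univ.filter (fun j => f j = f i), δ j) := by
    intro r
    rw [pow_two]
    unfold partSum
    rw [Finset.sum_mul]
    refine Finset.sum_congr rfl fun i hi => ?_
    simp only [mem_filter, mem_univ, true_and] at hi
    rw [hi]
  rw [Finset.sum_congr rfl fun r _ => h1 r, Finset.sum_fiberwise]
  have h2 : ∀ i : Fin k, δ i * (∑ j ∈ univ.filter (fun j => f j = f i), δ j)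
      = δ i ^ 2 + δ i * hfun δ f i := by
    intro i
    have h3 : (univ.filter fun j => f j = f i) = insert i ((univ.filter fun j => f j = f i).erase i) := by
      rw [Finset.insert_erase (by simp)]
    rw [h3, Finset.sum_insert (Finset.notMem_erase _ _)]
    have h4 : (univ.filter fun j => f j = f i).erase i = (univ.erase i).filter fun j => f j = f i := by
      rw [Finset.filter_erase]
    rw [h4]
    have h5 : ((univ.erase i).filter fun j => f j = f i).sum δ = hfun δ f i := by
      rw [hfun, Finset.sum_filter]
      refine Finset.sum_congr rfl fun j _ => ?_
      split_ifs <;> simp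
    rw [h5]; ring
  rw [Finset.sum_congr rfl fun i _ => h2 i, Finset.sum_add_distrib, Yfun]

lemma sum_erase_eq {δ : Fin k → ℝ} (hsum : ∑ i, δ i = 0) (i : Fin k) :
    ∑ j ∈ univ.erase i, δ j = -δ i := by
  have h := Finset.add_sum_erase univ δ (Finset.mem_univ i)
  rw [hsum] at h
  linarith

lemma sum_erase_gen (F : Fin k → ℝ) (i : Fin k) :
    ∑ j ∈ univ.erase i, F j = (∑ j, F j) - F i := by
  have h := Finset.add_sum_erase univ F (Finset.mem_univ i)
  linarith

lemma sum_erase2_gen (F : Fin k → ℝ) {i j : Fin k} (hji : j ≠ i) :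
    ∑ q ∈ (univ.erase i).erase j, F q = (∑ q, F q) - F i - F j := by
  have hj : j ∈ univ.erase i := by simp [hji]
  have h := Finset.add_sum_erase (univ.erase i) F hj
  have h2 := sum_erase_gen F i
  linarith

lemma sum_erase3_gen (F : Fin k → ℝ) {i j l : Fin k} (hji : j ≠ i) (hlj : l ≠ j)
    (hli : l ≠ i) :
    ∑ q ∈ ((univ.erase i).erase j).erase l, F q = (∑ q, F q) - F i - F j - F l := by
  have hl : l ∈ (univ.erase i).erase j := by simp [hli, hlj]
  have h := Finset.add_sum_erase ((univ.erase i).erase j) F hl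
  have h2 := sum_erase2_gen F hji
  linarith

lemma sum_Y {δ : Fin k → ℝ} (hsum : ∑ i, δ i = 0) {i0 j0 : Fin k} (h : j0 ≠ i0) :
    ∑ f ∈ balancedColorings k L, Yfun δ f
      = -(P2 k L i0 j0 : ℝ) * (∑ i, δ i ^ 2) := by
  unfold Yfun hfun
  rw [Finset.sum_comm]
  have step : ∀ i : Fin k,
      ∑ f ∈ balancedColorings k L,
        δ i * ∑ j ∈ univ.erase i, δ j * (if f j = f i then (1:ℝ) else 0)
      = δ i * (-δ i * (P2 k L i0 j0 : ℝ)) := by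
    intro i
    rw [← Finset.mul_sum]
    congr 1
    rw [Finset.sum_comm]
    have inner : ∀ j ∈ univ.erase i,
        ∑ f ∈ balancedColorings k L, δ j * (if f j = f i then (1:ℝ) else 0)
        = δ j * (P2 k L i0 j0 : ℝ) := by
      intro j hj
      rw [← Finset.mul_sum]
      congr 1
      rw [Finset.sum_boole]
      exact_mod_cast P2_eq (Finset.ne_of_mem_erase hj) h
    rw [Finset.sum_congr rfl inner, ← Finset.sum_mul, sum_erase_eq hsum i]
  rw [Finset.sum_congr rfl (fun i _ => step i), Finset.mul_sum]
  exact Finset.sum_congr rfl fun i _ => by ring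

lemma sum_h_mul_h (δ : Fin k → ℝ) (i p : Fin k) :
    ∑ f ∈ balancedColorings k L, hfun δ f i * hfun δ f p
      = ∑ j ∈ univ.erase i, ∑ q ∈ univ.erase p, δ j * δ q * (P4 k L i j p q : ℝ) := by
  unfold hfun
  have per_f : ∀ f ∈ balancedColorings k L,
      (∑ j ∈ univ.erase i, δ j * (if f j = f i then (1:ℝ) else 0))
        * (∑ q ∈ univ.erase p, δ q * (if f q = f p then (1:ℝ) else 0))
      = ∑ j ∈ univ.erase i, ∑ q ∈ univ.erase p,
          δ j * δ q * (if f j = f i ∧ f q = f p then (1:ℝ) else 0) := by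
    intro f _
    rw [Finset.sum_mul_sum]
    refine Finset.sum_congr rfl fun j _ => Finset.sum_congr rfl fun q _ => ?_
    by_cases h1 : f j = f i <;> by_cases h2 : f q = f p <;> simp [h1, h2]
  rw [Finset.sum_congr rfl per_f, Finset.sum_comm]
  refine Finset.sum_congr rfl fun j _ => ?_
  rw [Finset.sum_comm]
  refine Finset.sum_congr rfl fun q _ => ?_
  rw [← Finset.mul_sum, Finset.sum_boole]
  rfl

lemma P4_diag (x y : Fin k) : P4 k L x y x y = P2 k L x y :=
  card_congr_iff fun f => by tauto

lemma P4_swap (x y : Fin k) : P4 k L x y y x = P2 k L x y :=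
  card_congr_iff fun f => ⟨fun hh => hh.1, fun hh => ⟨hh, hh.symm⟩⟩

lemma P4_tri1 (x y q : Fin k) : P4 k L x y x q = P3 k L x y q :=
  card_congr_iff fun f => ⟨fun hh => ⟨hh.1.symm, hh.2.symm⟩, fun hh => ⟨hh.1.symm, hh.2.symm⟩⟩

lemma P4_tri2 (x y q : Fin k) : P4 k L x y y q = P3 k L y x q :=
  card_congr_iff fun f => ⟨fun hh => ⟨hh.1, hh.2.symm⟩, fun hh => ⟨hh.1, hh.2.symm⟩⟩

lemma P4_tri3 (x y p : Fin k) : P4 k L x y p x = P3 k L x y p :=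
  card_congr_iff fun f => ⟨fun hh => ⟨hh.1.symm, hh.2⟩, fun hh => ⟨hh.1.symm, hh.2⟩⟩

lemma P4_tri4 (x y p : Fin k) : P4 k L x y p y = P3 k L y x p := rfl

section Moments

variable {δ : Fin k → ℝ} {i0 j0 p0 q0 : Fin k}

lemma sq_sum_eq (δ : Fin k → ℝ) : ∑ x, δ x * δ x = ∑ x, δ x ^ 2 :=
  Finset.sum_congr rfl fun x _ => (pow_two _).symm

lemma Mii (hsum : ∑ i, δ i = 0)
    (h01 : i0 ≠ j0) (h02 : i0 ≠ p0) (h12 : j0 ≠ p0) (i : Fin k) :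
    ∑ f ∈ balancedColorings k L, hfun δ f i * hfun δ f i
      = (P2 k L i0 j0 : ℝ) * ((∑ x, δ x ^ 2) - δ i ^ 2)
        + (P3 k L i0 j0 p0 : ℝ) * (2 * δ i ^ 2 - (∑ x, δ x ^ 2)) := by
  rw [sum_h_mul_h]
  have inner : ∀ j ∈ univ.erase i,
      ∑ q ∈ univ.erase i, δ j * δ q * (P4 k L i j i q : ℝ)
      = δ j * δ j * (P2 k L i0 j0 : ℝ)
        + (P3 k L i0 j0 p0 : ℝ) * (δ j * (-δ i - δ j)) := by
    intro j hj
    have hji : j ≠ i := Finset.ne_of_mem_erase hj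
    rw [← Finset.add_sum_erase _ _ hj]
    have h1 : (P4 k L i j i j : ℝ) = (P2 k L i0 j0 : ℝ) := by
      rw [P4_diag]; exact_mod_cast P2_eq hji (Ne.symm h01)
    rw [h1]
    congr 1
    have h2 : ∀ q ∈ (univ.erase i).erase j,
        δ j * δ q * (P4 k L i j i q : ℝ) = (P3 k L i0 j0 p0 : ℝ) * δ j * δ q := by
      intro q hq
      have hqj : q ≠ j := Finset.ne_of_mem_erase hq
      have hqi : q ≠ i := Finset.ne_of_mem_erase (Finset.mem_of_mem_erase hq)
      have h3 : (P4 k L i j i q : ℝ) = (P3 k L i0 j0 p0 : ℝ) := by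
        rw [P4_tri1]
        exact_mod_cast P3_eq (Ne.symm hji) (Ne.symm hqi) (Ne.symm hqj) h01 h02 h12
      rw [h3]; ring
    rw [Finset.sum_congr rfl h2]
    have h4 : ∑ q ∈ (univ.erase i).erase j, (P3 k L i0 j0 p0 : ℝ) * δ j * δ q
        = (P3 k L i0 j0 p0 : ℝ) * δ j * ∑ q ∈ (univ.erase i).erase j, δ q := by
      rw [Finset.mul_sum]
    rw [h4, sum_erase2_gen δ hji, hsum]
    ring
  rw [Finset.sum_congr rfl inner, Finset.sum_add_distrib]
  have h5 : ∑ j ∈ univ.erase i, δ j * δ j * (P2 k L i0 j0 : ℝ)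
      = (∑ j ∈ univ.erase i, δ j * δ j) * (P2 k L i0 j0 : ℝ) := by
    rw [Finset.sum_mul]
  have h6 : ∑ j ∈ univ.erase i, (P3 k L i0 j0 p0 : ℝ) * (δ j * (-δ i - δ j))
      = (P3 k L i0 j0 p0 : ℝ) * ∑ j ∈ univ.erase i, (δ j * (-δ i - δ j)) := by
    rw [Finset.mul_sum]
  rw [h5, h6]
  have h7 : ∑ j ∈ univ.erase i, δ j * δ j = (∑ x, δ x ^ 2) - δ i ^ 2 := by
    have h9 := sum_erase_gen (fun x => δ x * δ x) i
    rw [sq_sum_eq δ] at h9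
    rw [h9, pow_two]
  have h8 : ∑ j ∈ univ.erase i, (δ j * (-δ i - δ j))
      = -δ i * (-δ i) - ((∑ x, δ x ^ 2) - δ i ^ 2) := by
    have e1 : ∀ j ∈ univ.erase i, δ j * (-δ i - δ j) = (-δ i) * δ j - δ j * δ j :=
      fun j _ => by ring
    rw [Finset.sum_congr rfl e1, Finset.sum_sub_distrib, ← Finset.mul_sum,
      sum_erase_eq hsum i, h7]
  rw [h7, h8]
  ring

lemma Mip (hsum : ∑ i, δ i = 0)
    (h01 : i0 ≠ j0) (h02 : i0 ≠ p0) (h03 : i0 ≠ q0) (h12 : j0 ≠ p0) (h13 : j0 ≠ q0)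
    (h23 : p0 ≠ q0) {i p : Fin k} (hpi : p ≠ i) :
    ∑ f ∈ balancedColorings k L, hfun δ f i * hfun δ f p
      = (P2 k L i0 j0 : ℝ) * (δ i * δ p)
        + (P3 k L i0 j0 p0 : ℝ)
          * ((∑ x, δ x ^ 2) - 2 * δ i ^ 2 - 2 * δ p ^ 2 - 2 * (δ i * δ p))
        + (P4 k L i0 j0 p0 q0 : ℝ)
          * (2 * δ i ^ 2 + 2 * δ p ^ 2 + 2 * (δ i * δ p) - (∑ x, δ x ^ 2)) := by
  have T2cast : ∀ {x y : Fin k}, y ≠ x → (P2 k L x y : ℝ) = (P2 k L i0 j0 : ℝ) := by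
    intro x y hxy; exact_mod_cast P2_eq hxy (Ne.symm h01)
  have T3cast : ∀ {x y z : Fin k}, x ≠ y → x ≠ z → y ≠ z →
      (P3 k L x y z : ℝ) = (P3 k L i0 j0 p0 : ℝ) := by
    intro x y z a b c; exact_mod_cast P3_eq a b c h01 h02 h12
  have T4cast : ∀ {a b cc d : Fin k}, a ≠ b → a ≠ cc → a ≠ d → b ≠ cc → b ≠ d → cc ≠ d →
      (P4 k L a b cc d : ℝ) = (P4 k L i0 j0 p0 q0 : ℝ) := by
    intro a b cc d u1 u2 u3 u4 u5 u6
    exact_mod_cast P4_eq u1 u2 u3 u4 u5 u6 h01 h02 h03 h12 h13 h23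
  rw [sum_h_mul_h]
  have hpmem : p ∈ univ.erase i := by simp [hpi]
  rw [← Finset.add_sum_erase _ _ hpmem]
  have termp : ∑ q ∈ univ.erase p, δ p * δ q * (P4 k L i p p q : ℝ)
      = δ p * δ i * (P2 k L i0 j0 : ℝ)
        + (P3 k L i0 j0 p0 : ℝ) * (δ p * (-δ i - δ p)) := by
    have himem : i ∈ univ.erase p := by simp [Ne.symm hpi]
    rw [← Finset.add_sum_erase _ _ himem]
    have e1 : (P4 k L i p p i : ℝ) = (P2 k L i0 j0 : ℝ) := by
      rw [P4_swap]; exact T2cast hpi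
    rw [e1]
    congr 1
    have e2 : ∀ q ∈ (univ.erase p).erase i,
        δ p * δ q * (P4 k L i p p q : ℝ) = (P3 k L i0 j0 p0 : ℝ) * δ p * δ q := by
      intro q hq
      have hqi : q ≠ i := Finset.ne_of_mem_erase hq
      have hqp : q ≠ p := Finset.ne_of_mem_erase (Finset.mem_of_mem_erase hq)
      have e3 : (P4 k L i p p q : ℝ) = (P3 k L i0 j0 p0 : ℝ) := by
        rw [P4_tri2]; exact T3cast hpi (Ne.symm hqp) (Ne.symm hqi)
      rw [e3]; ring
    rw [Finset.sum_congr rfl e2]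
    have e4 : ∑ q ∈ (univ.erase p).erase i, (P3 k L i0 j0 p0 : ℝ) * δ p * δ q
        = (P3 k L i0 j0 p0 : ℝ) * δ p * ∑ q ∈ (univ.erase p).erase i, δ q := by
      rw [Finset.mul_sum]
    rw [e4, sum_erase2_gen δ (Ne.symm hpi), hsum]
    ring
  rw [termp]
  have perj : ∀ j ∈ (univ.erase i).erase p,
      ∑ q ∈ univ.erase p, δ j * δ q * (P4 k L i j p q : ℝ)
      = ((P3 k L i0 j0 p0 : ℝ) * δ i - (P4 k L i0 j0 p0 q0 : ℝ) * δ p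
            - (P4 k L i0 j0 p0 q0 : ℝ) * δ i) * δ j
        + ((P3 k L i0 j0 p0 : ℝ) - (P4 k L i0 j0 p0 q0 : ℝ)) * (δ j * δ j) := by
    intro j hj
    have hjp : j ≠ p := Finset.ne_of_mem_erase hj
    have hji : j ≠ i := Finset.ne_of_mem_erase (Finset.mem_of_mem_erase hj)
    have himem : i ∈ univ.erase p := by simp [Ne.symm hpi]
    rw [← Finset.add_sum_erase _ _ himem]
    have hjmem : j ∈ (univ.erase p).erase i := by simp [hji, hjp]
    rw [← Finset.add_sum_erase _ _ hjmem]
    have e1 : (P4 k L i j p i : ℝ) = (P3 k L i0 j0 p0 : ℝ) := by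
      rw [P4_tri3]; exact T3cast (Ne.symm hji) (Ne.symm hpi) hjp
    have e2 : (P4 k L i j p j : ℝ) = (P3 k L i0 j0 p0 : ℝ) := by
      rw [P4_tri4]; exact T3cast hji hjp (Ne.symm hpi)
    rw [e1, e2]
    have e5 : ∀ q ∈ ((univ.erase p).erase i).erase j,
        δ j * δ q * (P4 k L i j p q : ℝ) = ((P4 k L i0 j0 p0 q0 : ℝ) * δ j) * δ q := by
      intro q hq
      have hqj : q ≠ j := Finset.ne_of_mem_erase hq
      have hqi : q ≠ i := Finset.ne_of_mem_erase (Finset.mem_of_mem_erase hq)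
      have hqp : q ≠ p :=
        Finset.ne_of_mem_erase (Finset.mem_of_mem_erase (Finset.mem_of_mem_erase hq))
      have e6 : (P4 k L i j p q : ℝ) = (P4 k L i0 j0 p0 q0 : ℝ) :=
        T4cast (Ne.symm hji) (Ne.symm hpi) (Ne.symm hqi) hjp (Ne.symm hqj) (Ne.symm hqp)
      rw [e6]; ring
    rw [Finset.sum_congr rfl e5]
    have e7 : ∑ q ∈ ((univ.erase p).erase i).erase j,
          ((P4 k L i0 j0 p0 q0 : ℝ) * δ j) * δ q
        = ((P4 k L i0 j0 p0 q0 : ℝ) * δ j)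
            * ∑ q ∈ ((univ.erase p).erase i).erase j, δ q := by
      rw [Finset.mul_sum]
    rw [e7, sum_erase3_gen δ (Ne.symm hpi) hji hjp, hsum]
    ring
  rw [Finset.sum_congr rfl perj, Finset.sum_add_distrib]
  have e8 : ∑ j ∈ (univ.erase i).erase p,
        ((P3 k L i0 j0 p0 : ℝ) * δ i - (P4 k L i0 j0 p0 q0 : ℝ) * δ p
          - (P4 k L i0 j0 p0 q0 : ℝ) * δ i) * δ j
      = ((P3 k L i0 j0 p0 : ℝ) * δ i - (P4 k L i0 j0 p0 q0 : ℝ) * δ p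
          - (P4 k L i0 j0 p0 q0 : ℝ) * δ i) * ∑ j ∈ (univ.erase i).erase p, δ j := by
    rw [Finset.mul_sum]
  have e9 : ∑ j ∈ (univ.erase i).erase p,
        ((P3 k L i0 j0 p0 : ℝ) - (P4 k L i0 j0 p0 q0 : ℝ)) * (δ j * δ j)
      = ((P3 k L i0 j0 p0 : ℝ) - (P4 k L i0 j0 p0 q0 : ℝ))
          * ∑ j ∈ (univ.erase i).erase p, δ j * δ j := by
    rw [Finset.mul_sum]
  have e10 : ∑ j ∈ (univ.erase i).erase p, δ j * δ j
      = (∑ x, δ x ^ 2) - δ i ^ 2 - δ p ^ 2 := by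
    have h9 := sum_erase2_gen (fun x => δ x * δ x) hpi
    rw [sq_sum_eq δ] at h9
    rw [h9, pow_two, pow_two]
  rw [e8, e9, e10, sum_erase2_gen δ hpi, hsum]
  ring

lemma sum_Y_sq (hsum : ∑ i, δ i = 0)
    (h01 : i0 ≠ j0) (h02 : i0 ≠ p0) (h03 : i0 ≠ q0) (h12 : j0 ≠ p0) (h13 : j0 ≠ q0)
    (h23 : p0 ≠ q0) :
    ∑ f ∈ balancedColorings k L, (Yfun δ f) ^ 2
      = 2 * (P2 k L i0 j0 : ℝ) * ((∑ x, δ x ^ 2) ^ 2 - (∑ x, δ x ^ 4))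
        + (P3 k L i0 j0 p0 : ℝ) * (8 * (∑ x, δ x ^ 4) - 4 * (∑ x, δ x ^ 2) ^ 2)
        + (P4 k L i0 j0 p0 q0 : ℝ)
            * (3 * (∑ x, δ x ^ 2) ^ 2 - 6 * (∑ x, δ x ^ 4)) := by
  have expand : ∀ f ∈ balancedColorings k L,
      (Yfun δ f) ^ 2 = ∑ i, ∑ p, δ i * δ p * (hfun δ f i * hfun δ f p) := by
    intro f _
    rw [Yfun, pow_two, Finset.sum_mul_sum]
    exact Finset.sum_congr rfl fun i _ => Finset.sum_congr rfl fun p _ => by ring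
  rw [Finset.sum_congr rfl expand, Finset.sum_comm]
  have swap2 : ∀ i : Fin k,
      ∑ f ∈ balancedColorings k L, ∑ p, δ i * δ p * (hfun δ f i * hfun δ f p)
      = ∑ p, δ i * δ p * (∑ f ∈ balancedColorings k L, hfun δ f i * hfun δ f p) := by
    intro i
    rw [Finset.sum_comm]
    exact Finset.sum_congr rfl fun p _ => (Finset.mul_sum _ _ _).symm
  rw [Finset.sum_congr rfl fun i _ => swap2 i]
  have spliti : ∀ i : Fin k,
      ∑ p, δ i * δ p * (∑ f ∈ balancedColorings k L, hfun δ f i * hfun δ f p)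
      = (2 * ((P4 k L i0 j0 p0 q0 : ℝ) - (P3 k L i0 j0 p0 : ℝ)) * (∑ x, δ x ^ 3)) * δ i
        + ((2 * (P2 k L i0 j0 : ℝ) - 4 * (P3 k L i0 j0 p0 : ℝ)
            + 3 * (P4 k L i0 j0 p0 q0 : ℝ)) * (∑ x, δ x ^ 2)) * δ i ^ 2
        + (-2 * (P2 k L i0 j0 : ℝ) + 8 * (P3 k L i0 j0 p0 : ℝ)
            - 6 * (P4 k L i0 j0 p0 q0 : ℝ)) * δ i ^ 4 := by
    intro i
    rw [← Finset.add_sum_erase univ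
      (fun p => δ i * δ p * (∑ f ∈ balancedColorings k L, hfun δ f i * hfun δ f p))
      (Finset.mem_univ i)]
    rw [Mii hsum h01 h02 h12 i]
    have lin : ∀ p ∈ univ.erase i,
        δ i * δ p * (∑ f ∈ balancedColorings k L, hfun δ f i * hfun δ f p)
        = (δ i * ((P3 k L i0 j0 p0 : ℝ) * (∑ x, δ x ^ 2)
              - 2 * (P3 k L i0 j0 p0 : ℝ) * δ i ^ 2
              + 2 * (P4 k L i0 j0 p0 q0 : ℝ) * δ i ^ 2
              - (P4 k L i0 j0 p0 q0 : ℝ) * (∑ x, δ x ^ 2))) * δ p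
          + (((P2 k L i0 j0 : ℝ) - 2 * (P3 k L i0 j0 p0 : ℝ)
              + 2 * (P4 k L i0 j0 p0 q0 : ℝ)) * δ i ^ 2) * (δ p * δ p)
          + (2 * ((P4 k L i0 j0 p0 q0 : ℝ) - (P3 k L i0 j0 p0 : ℝ)) * δ i)
              * (δ p * (δ p * δ p)) := by
      intro p hp
      rw [Mip hsum h01 h02 h03 h12 h13 h23 (Finset.ne_of_mem_erase hp)]
      ring
    rw [Finset.sum_congr rfl lin]
    rw [Finset.sum_add_distrib, Finset.sum_add_distrib, ← Finset.mul_sum, ← Finset.mul_sum,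
      ← Finset.mul_sum]
    rw [sum_erase_eq hsum i]
    have c2 : ∑ p ∈ univ.erase i, δ p * δ p = (∑ x, δ x ^ 2) - δ i ^ 2 := by
      have h9 := sum_erase_gen (fun x => δ x * δ x) i
      rw [sq_sum_eq δ] at h9
      rw [h9, pow_two]
    have c3 : ∑ p ∈ univ.erase i, δ p * (δ p * δ p) = (∑ x, δ x ^ 3) - δ i ^ 3 := by
      have h9 := sum_erase_gen (fun x => δ x * (δ x * δ x)) i
      have h10 : ∑ x, δ x * (δ x * δ x) = ∑ x, δ x ^ 3 :=
        Finset.sum_congr rfl fun x _ => by ring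
      rw [h10] at h9
      rw [h9]
      ring
    rw [c2, c3]
    ring
  rw [Finset.sum_congr rfl fun i _ => spliti i]
  rw [Finset.sum_add_distrib, Finset.sum_add_distrib, ← Finset.mul_sum, ← Finset.mul_sum,
    ← Finset.mul_sum, hsum]
  ring

end Moments
end RFA


set_option maxHeartbeats 2000000 in
/-- There is an absolute constant `c > 0` such that for all `2 ≤ L < k` with `L ∣ k` and
every nonzero `δ : Fin k → ℝ` summing to `0`, a uniformly random balanced `L`-coloring `f`
satisfies `‖Z‖₂ > ‖δ‖₂ / 2` with probability at least `c`, where `Z_r = ∑_{i : f i = r} δ_i`. -/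
theorem random_flattening_anticoncentration :
    ∃ c : ℝ, 0 < c ∧
      ∀ (k L : ℕ), 2 ≤ L → L < k → L ∣ k →
        ∀ δ : Fin k → ℝ, δ ≠ 0 → (∑ i, δ i = 0) →
          c ≤ (((balancedColorings k L).filter fun f =>
                Real.sqrt (∑ r, partSum δ f r ^ 2) > Real.sqrt (∑ i, δ i ^ 2) / 2).card : ℝ)
              / ((balancedColorings k L).card : ℝ) := by
  refine ⟨1/125, by norm_num, ?_⟩
  intro k L hL2 hLk hdvd δ hδ hsum
  obtain ⟨m, hm⟩ := hdvd
  have hL0 : 0 < L := by omega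
  have hm2 : 2 ≤ m := by
    rcases Nat.lt_or_ge m 2 with h | h
    · exfalso
      have hkL : k ≤ L := by
        rw [hm]
        calc L * m ≤ L * 1 := Nat.mul_le_mul_left _ (by omega)
          _ = L := by ring
      omega
    · exact h
  have hk4 : 4 ≤ k := by
    rw [hm]
    calc (4:ℕ) = 2 * 2 := by norm_num
      _ ≤ L * m := Nat.mul_le_mul hL2 hm2
  have h2m : 2 * m ≤ k := by rw [hm]; exact Nat.mul_le_mul_right m hL2
  obtain ⟨i0, j0, p0, q0, h01, h02, h03, h12, h13, h23⟩ :
      ∃ a b c d : Fin k, a ≠ b ∧ a ≠ c ∧ a ≠ d ∧ b ≠ c ∧ b ≠ d ∧ c ≠ d := by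
    refine ⟨⟨0, by omega⟩, ⟨1, by omega⟩, ⟨2, by omega⟩, ⟨3, by omega⟩, ?_, ?_, ?_, ?_, ?_, ?_⟩
      <;> simp [Fin.ext_iff]
  have hNpos : 0 < (balancedColorings k L).card :=
    Finset.card_pos.mpr (RFA.balanced_nonempty hm hL0)
  set N : ℝ := ((balancedColorings k L).card : ℝ) with hN
  have hNr : 0 < N := by rw [hN]; exact_mod_cast hNpos
  set s2 : ℝ := ∑ x, δ x ^ 2 with hs2
  set s4 : ℝ := ∑ x, δ x ^ 4 with hs4
  have hs2pos : 0 < s2 := by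
    have hex : ∃ i, δ i ≠ 0 := by
      by_contra h; push_neg at h; exact hδ (funext h)
    obtain ⟨i, hi⟩ := hex
    exact Finset.sum_pos' (fun x _ => sq_nonneg _) ⟨i, Finset.mem_univ i, by positivity⟩
  have hs4nn : 0 ≤ s4 := Finset.sum_nonneg fun x _ => by positivity
  have hs4le : s4 ≤ s2 ^ 2 := by
    have step : ∀ x : Fin k, δ x ^ 4 ≤ δ x ^ 2 * s2 := by
      intro x
      have h1 : δ x ^ 2 ≤ s2 :=
        Finset.single_le_sum (f := fun x => δ x ^ 2) (fun x _ => sq_nonneg _)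
          (Finset.mem_univ x)
      calc δ x ^ 4 = δ x ^ 2 * δ x ^ 2 := by ring
        _ ≤ δ x ^ 2 * s2 := mul_le_mul_of_nonneg_left h1 (sq_nonneg _)
    calc s4 = ∑ x, δ x ^ 4 := hs4
      _ ≤ ∑ x, δ x ^ 2 * s2 := Finset.sum_le_sum fun x _ => step x
      _ = s2 * s2 := by rw [← Finset.sum_mul]
      _ = s2 ^ 2 := by ring
  set T2r : ℝ := (RFA.P2 k L i0 j0 : ℝ) with hT2r
  set T3r : ℝ := (RFA.P3 k L i0 j0 p0 : ℝ) with hT3r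
  set T4r : ℝ := (RFA.P4 k L i0 j0 p0 q0 : ℝ) with hT4r
  have hT2nn : 0 ≤ T2r := by positivity
  have hT3nn : 0 ≤ T3r := by positivity
  have hT4nn : 0 ≤ T4r := by positivity
  have hT3le : T3r ≤ N := by
    rw [hT3r, hN]
    exact_mod_cast Finset.card_filter_le _ _
  have hT4le : T4r ≤ N := by
    rw [hT4r, hN]
    exact_mod_cast Finset.card_filter_le _ _
  have hT2half : 2 * T2r ≤ N := by
    have hagg := RFA.P2_agg (L := L) hm hL0 (Ne.symm h01)
    have hle : 2 * (m - 1) ≤ k - 1 := by omega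
    have hmul : (k - 1) * (2 * RFA.P2 k L i0 j0) ≤ (k - 1) * (balancedColorings k L).card := by
      calc (k - 1) * (2 * RFA.P2 k L i0 j0) = 2 * ((k - 1) * RFA.P2 k L i0 j0) := by ring
        _ = 2 * ((m - 1) * (balancedColorings k L).card) := by rw [hagg]
        _ = (2 * (m - 1)) * (balancedColorings k L).card := by ring
        _ ≤ (k - 1) * (balancedColorings k L).card :=
            Nat.mul_le_mul_right _ hle
    have := Nat.le_of_mul_le_mul_left hmul (by omega)
    rw [hT2r, hN]
    exact_mod_cast this
  -- moment identities
  have hSumY : ∑ f ∈ balancedColorings k L, RFA.Yfun δ f = -T2r * s2 :=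
    RFA.sum_Y hsum (Ne.symm h01)
  have hSumY2 : ∑ f ∈ balancedColorings k L, (RFA.Yfun δ f) ^ 2
      = 2 * T2r * (s2 ^ 2 - s4) + T3r * (8 * s4 - 4 * s2 ^ 2)
        + T4r * (3 * s2 ^ 2 - 6 * s4) :=
    RFA.sum_Y_sq hsum h01 h02 h03 h12 h13 h23
  have hWeq : ∀ f : Fin k → Fin L, ∑ r, partSum δ f r ^ 2 = s2 + RFA.Yfun δ f :=
    fun f => RFA.W_eq δ f
  -- Cantelli-type counting bound
  set bad := (balancedColorings k L).filter
    (fun f => ¬ (Real.sqrt (∑ r, partSum δ f r ^ 2) > Real.sqrt s2 / 2)) with hbad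
  set good := (balancedColorings k L).filter
    (fun f => Real.sqrt (∑ r, partSum δ f r ^ 2) > Real.sqrt s2 / 2) with hgood
  have hcards : good.card + bad.card = (balancedColorings k L).card :=
    Finset.card_filter_add_card_filter_not _
  have hsqrt4 : Real.sqrt (s2 / 4) = Real.sqrt s2 / 2 := by
    have h4 : Real.sqrt 4 = 2 := by
      rw [show (4:ℝ) = 2 ^ 2 by norm_num, Real.sqrt_sq (by norm_num : (0:ℝ) ≤ 2)]
    rw [Real.sqrt_div' s2 (by norm_num : (0:ℝ) ≤ 4), h4]
  have hbadW : ∀ f ∈ bad, ∑ r, partSum δ f r ^ 2 ≤ s2 / 4 := by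
    intro f hf
    rw [hbad, Finset.mem_filter] at hf
    obtain ⟨hfB, hle⟩ := hf
    rw [not_lt] at hle
    by_contra hcon
    push_neg at hcon
    have h4 : Real.sqrt (s2 / 4) < Real.sqrt (∑ r, partSum δ f r ^ 2) :=
      Real.sqrt_lt_sqrt (by positivity) hcon
    rw [hsqrt4] at h4
    linarith
  have key : (bad.card : ℝ) * (125 / 4 * s2) ^ 2
      ≤ ∑ f ∈ balancedColorings k L, (63 / 2 * s2 - ∑ r, partSum δ f r ^ 2) ^ 2 := by
    have step1 : (bad.card : ℝ) * (125 / 4 * s2) ^ 2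
        = ∑ _f ∈ bad, (125 / 4 * s2) ^ 2 := by
      rw [Finset.sum_const, nsmul_eq_mul]
    rw [step1]
    have step2 : ∑ f ∈ bad, (125 / 4 * s2) ^ 2
        ≤ ∑ f ∈ bad, (63 / 2 * s2 - ∑ r, partSum δ f r ^ 2) ^ 2 := by
      refine Finset.sum_le_sum fun f hf => ?_
      have h1 := hbadW f hf
      have h2 : (125:ℝ) / 4 * s2 ≤ 63 / 2 * s2 - ∑ r, partSum δ f r ^ 2 := by linarith
      exact pow_le_pow_left₀ (by positivity) h2 2
    refine step2.trans ?_
    refine Finset.sum_le_sum_of_subset_of_nonneg ?_ fun f _ _ => sq_nonneg _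
    rw [hbad]; exact Finset.filter_subset _ _
  have expand2 : ∑ f ∈ balancedColorings k L, (63 / 2 * s2 - ∑ r, partSum δ f r ^ 2) ^ 2
      ≤ 3875 / 4 * N * s2 ^ 2 := by
    have e : ∀ f ∈ balancedColorings k L,
        (63 / 2 * s2 - ∑ r, partSum δ f r ^ 2) ^ 2
        = (61 / 2 * s2) ^ 2 - 61 * s2 * RFA.Yfun δ f + (RFA.Yfun δ f) ^ 2 := by
      intro f _
      rw [hWeq f]; ring
    rw [Finset.sum_congr rfl e]
    rw [Finset.sum_add_distrib, Finset.sum_sub_distrib, Finset.sum_const, nsmul_eq_mul,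
      ← Finset.mul_sum, hSumY, hSumY2]
    rw [← hN]
    nlinarith [mul_nonneg hT2nn hs4nn, mul_nonneg hT3nn (sub_nonneg.mpr hs4le),
      mul_nonneg (sub_nonneg.mpr hT3le) (sq_nonneg s2),
      mul_nonneg (sub_nonneg.mpr hT4le) (sq_nonneg s2),
      mul_nonneg hT4nn hs4nn, mul_nonneg hT2nn (sub_nonneg.mpr hs4le),
      mul_nonneg (sub_nonneg.mpr hT2half) (sq_nonneg s2)]
  have hbadcard : (bad.card : ℝ) ≤ 124 / 125 * N := by
    have h1 := key.trans expand2
    have h2 : 0 < s2 ^ 2 := by positivity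
    nlinarith
  have hgoodcard : (N : ℝ) / 125 ≤ (good.card : ℝ) := by
    have h3 : (good.card : ℝ) + (bad.card : ℝ) = N := by
      rw [hN]; exact_mod_cast hcards
    linarith
  rw [le_div_iff₀ hNr]
  linarith
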